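/- The Mehler kernel satisfies the Chapman–Kolmogorov (semigroup) identity: for all s, t > 0 and x, y ∈ ℝⁿ, ∫_{ℝⁿ} p_γ(x,z;s) p_γ(z,y;t) dγ(z) = p_γ(x,y;s+t). -/

import Mathlib

open Real MeasureTheory
open scoped NNReal ENNReal

set_option maxHeartbeats 1000000

noncomputable abbrev Euc (n : ℕ) := EuclideanSpace ℝ (Fin n)

/-- The standard Gaussian probability measure on `ℝⁿ`. -/
noncomputable def gaussianMeasure (n : ℕ) : Measure (Euc n) :=
  volume.withDensity fun x =>
    ENNReal.ofReal ((2 * Real.pi) ^ (-(n : ℝ) / 2) * Real.exp (-‖x‖ ^ 2 / 2))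

/-- The Gaussian Mehler kernel `p_γ(x,z;t)`. -/
noncomputable def pker (n : ℕ) (t : ℝ) (x z : Euc n) : ℝ :=
  (1 - Real.exp (-2 * t)) ^ (-(n : ℝ) / 2) *
    Real.exp (-(‖x‖ ^ 2 - 2 * Real.exp t * (inner ℝ x z : ℝ) + ‖z‖ ^ 2) /
      (2 * (Real.exp (2 * t) - 1)))



section helpers
open Complex in
lemma gauss_int (n : ℕ) {b : ℝ} (hb : 0 < b) (w : EuclideanSpace ℝ (Fin n)) :
    ∫ v : EuclideanSpace ℝ (Fin n), Real.exp (-b * ‖v‖ ^ 2 + (inner ℝ w v : ℝ)) =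
      (π / b) ^ ((n : ℝ) / 2) * Real.exp (‖w‖ ^ 2 / (4 * b)) := by
  rw [← Complex.ofReal_inj]
  have h := GaussianFourier.integral_cexp_neg_mul_sq_norm_add
      (V := EuclideanSpace ℝ (Fin n)) (b := (b : ℂ)) (by simpa using hb) 1 w
  simp only [one_mul, one_pow] at h
  have key : ((∫ v : EuclideanSpace ℝ (Fin n),
      Real.exp (-b * ‖v‖ ^ 2 + (inner ℝ w v : ℝ)) : ℝ) : ℂ)
      = ∫ v : EuclideanSpace ℝ (Fin n),
        Complex.exp (-(b : ℂ) * (‖v‖ : ℂ) ^ 2 + ((inner ℝ w v : ℝ) : ℂ)) := by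
    change Complex.ofRealLI (∫ v : EuclideanSpace ℝ (Fin n),
      Real.exp (-b * ‖v‖ ^ 2 + (inner ℝ w v : ℝ))) = _
    rw [← Complex.ofRealLI.integral_comp_comm]
    congr 1
    ext v
    show ((rexp (-b * ‖v‖ ^ 2 + (inner ℝ w v : ℝ)) : ℝ) : ℂ) = _
    push_cast
    ring_nf
  rw [key, h, Complex.ofReal_mul, Complex.ofReal_cpow (by positivity),
    Complex.ofReal_exp]
  congr 2 <;> push_cast [finrank_euclideanSpace, Fintype.card_fin] <;> ring

lemma final_helper (K P1 P2 S F W Q T : ℝ) (hsc : K * (P1 * (P2 * S)) = Q)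
    (he : F + W = T) :
    K * (P1 * (P2 * Real.exp F)) * (S * Real.exp W) = Q * Real.exp T := by
  rw [← hsc, ← he, Real.exp_add]; ring

lemma exp_helper (K P1 P2 A E1 E2 F G : ℝ) (h : A + E1 + E2 = F + G) :
    K * Real.exp A * (P1 * Real.exp E1 * (P2 * Real.exp E2))
      = K * (P1 * (P2 * Real.exp F)) * Real.exp G := by
  have l : K * Real.exp A * (P1 * Real.exp E1 * (P2 * Real.exp E2))
      = K * P1 * P2 * Real.exp (A + E1 + E2) := by
    rw [Real.exp_add, Real.exp_add]; ring
  have r : K * (P1 * (P2 * Real.exp F)) * Real.exp G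
      = K * P1 * P2 * Real.exp (F + G) := by
    rw [Real.exp_add]; ring
  rw [l, r, h]


end helpers

theorem mehler_chapman_kolmogorov (n : ℕ) (s t : ℝ) (hs : 0 < s) (ht : 0 < t)
    (x y : Euc n) :
    ∫ z, pker n s x z * pker n t z y ∂(gaussianMeasure n) = pker n (s + t) x y := by

  have hU : 1 < Real.exp s := by rw [← Real.exp_zero]; exact Real.exp_lt_exp.2 hs
  have hV : 1 < Real.exp t := by rw [← Real.exp_zero]; exact Real.exp_lt_exp.2 ht
  set U := Real.exp s with hUdef
  set V := Real.exp t with hVdef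
  have hU0 : (0:ℝ) < U := lt_trans zero_lt_one hU
  have hV0 : (0:ℝ) < V := lt_trans zero_lt_one hV
  have e2s : Real.exp (2*s) = U*U := by rw [hUdef, ← Real.exp_add]; ring_nf
  have e2t : Real.exp (2*t) = V*V := by rw [hVdef, ← Real.exp_add]; ring_nf
  have est : Real.exp (s+t) = U*V := by rw [hUdef, hVdef, ← Real.exp_add]
  have e2st : Real.exp (2*(s+t)) = U*U*(V*V) := by
    rw [show 2*(s+t) = s+s+(t+t) by ring, Real.exp_add, Real.exp_add, Real.exp_add]
  have ems : Real.exp (-2*s) = (U*U)⁻¹ := by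
    rw [show -2*s = -(2*s) by ring, Real.exp_neg, e2s]
  have emt : Real.exp (-2*t) = (V*V)⁻¹ := by
    rw [show -2*t = -(2*t) by ring, Real.exp_neg, e2t]
  have emst : Real.exp (-2*(s+t)) = (U*U*(V*V))⁻¹ := by
    rw [show -2*(s+t) = -(2*(s+t)) by ring, Real.exp_neg, e2st]
  have ha : (0:ℝ) < U*U - 1 := by nlinarith
  have hb2 : (0:ℝ) < V*V - 1 := by nlinarith
  have hD : (0:ℝ) < U*U*(V*V) - 1 := by nlinarith
  have h1 : (0:ℝ) < 1 - (U*U)⁻¹ := by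
    rw [show (1:ℝ) - (U*U)⁻¹ = (U*U-1)/(U*U) by field_simp]; positivity
  have h2 : (0:ℝ) < 1 - (V*V)⁻¹ := by
    rw [show (1:ℝ) - (V*V)⁻¹ = (V*V-1)/(V*V) by field_simp]; positivity
  have h3 : (0:ℝ) < 1 - (U*U*(V*V))⁻¹ := by
    rw [show (1:ℝ) - (U*U*(V*V))⁻¹ = (U*U*(V*V)-1)/(U*U*(V*V)) by field_simp]; positivity
  have hbbpos : (0:ℝ) < 1/(2*(U*U-1)) + 1/(2*(V*V-1)) + 1/2 := by positivity
  -- unfold the measure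
  rw [gaussianMeasure]
  have hmeas : Measurable fun z : Euc n =>
      Real.toNNReal ((2 * π) ^ (-(n : ℝ) / 2) * Real.exp (-‖z‖ ^ 2 / 2)) := by
    exact measurable_real_toNNReal.comp (measurable_const.mul
      (Real.measurable_exp.comp (((measurable_norm.pow_const 2).neg).div_const 2)))
  rw [show (fun x : Euc n =>
      ENNReal.ofReal ((2 * Real.pi) ^ (-(n : ℝ) / 2) * Real.exp (-‖x‖ ^ 2 / 2)))
      = (fun x : Euc n => ((Real.toNNReal ((2 * Real.pi) ^ (-(n : ℝ) / 2)
          * Real.exp (-‖x‖ ^ 2 / 2)) : ℝ≥0) : ℝ≥0∞)) from rfl]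
  rw [integral_withDensity_eq_integral_smul hmeas]
  -- pointwise rewrite of the integrand
  have hpt : (fun z : Euc n =>
      (Real.toNNReal ((2 * Real.pi) ^ (-(n : ℝ) / 2) * Real.exp (-‖z‖ ^ 2 / 2)))
        • (pker n s x z * pker n t z y))
      = fun z : Euc n =>
        ((2*Real.pi) ^ (-(n:ℝ)/2) * ((1 - (U*U)⁻¹) ^ (-(n:ℝ)/2) *
          ((1 - (V*V)⁻¹) ^ (-(n:ℝ)/2) *
            Real.exp (-(‖x‖^2/(2*(U*U-1))) - ‖y‖^2/(2*(V*V-1))))))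
        * Real.exp (-(1/(2*(U*U-1)) + 1/(2*(V*V-1)) + 1/2)*‖z‖^2
            + (inner ℝ ((U/(U*U-1)) • x + (V/(V*V-1)) • y) z : ℝ)) := by
    funext z
    rw [NNReal.smul_def, smul_eq_mul, Real.coe_toNNReal _ (by positivity)]
    simp only [pker, ems, emt, e2s, e2t]
    rw [real_inner_comm y z]
    rw [inner_add_left, real_inner_smul_left, real_inner_smul_left]
    exact exp_helper _ _ _ _ _ _ _ _ (by field_simp; ring)
  rw [hpt, integral_const_mul, gauss_int n hbbpos]
  -- final algebra
  simp only [pker, ems, emt, emst, e2st, est]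
  have hbeq : 1/(2*(U*U-1)) + 1/(2*(V*V-1)) + 1/2
      = (U*U*(V*V)-1)/(2*((U*U-1)*(V*V-1))) := by
    field_simp [(by nlinarith : (0:ℝ) < U^2-1).ne', (by nlinarith : (0:ℝ) < V^2-1).ne', (by nlinarith : (0:ℝ) < U^2*V^2-1).ne']; ring
  have hw : ‖(U/(U*U-1)) • x + (V/(V*V-1)) • y‖^2
      = (U/(U*U-1))^2*‖x‖^2 + 2*((U/(U*U-1))*(V/(V*V-1))*(inner ℝ x y : ℝ))
        + (V/(V*V-1))^2*‖y‖^2 := by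
    rw [norm_add_sq_real, norm_smul, norm_smul, real_inner_smul_left,
      real_inner_smul_right]
    simp only [Real.norm_eq_abs, mul_pow, sq_abs]
    ring
  rw [hw, hbeq]
  refine final_helper _ _ _ _ _ _ _ _ ?_ ?_
  · -- scalar part
    have hBpos : (0:ℝ) < (U*U*(V*V)-1)/(2*((U*U-1)*(V*V-1))) :=
      div_pos hD (by positivity)
    have hpb : π / ((U*U*(V*V)-1)/(2*((U*U-1)*(V*V-1))))
        = (2*π*((1-(U*U)⁻¹)*(1-(V*V)⁻¹)))/(1-(U*U*(V*V))⁻¹) := by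
      field_simp
    simp only [neg_div]
    rw [Real.rpow_neg (by positivity : (0:ℝ) ≤ 2*π), ← Real.inv_rpow (by positivity),
        Real.rpow_neg h1.le, ← Real.inv_rpow h1.le,
        Real.rpow_neg h2.le, ← Real.inv_rpow h2.le,
        Real.rpow_neg h3.le, ← Real.inv_rpow h3.le,
        ← Real.mul_rpow (inv_nonneg.2 h2.le) (le_of_lt (div_pos pi_pos hBpos)),
        ← Real.mul_rpow (inv_nonneg.2 h1.le) (by positivity),
        ← Real.mul_rpow (by positivity) (by positivity)]
    · congr 1
      field_simp [(by nlinarith : (0:ℝ) < U^2-1).ne', (by nlinarith : (0:ℝ) < V^2-1).ne', (by nlinarith : (0:ℝ) < U^2*V^2-1).ne']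
  · -- exponent part
    field_simp [(by nlinarith : (0:ℝ) < U^2-1).ne', (by nlinarith : (0:ℝ) < V^2-1).ne', (by nlinarith : (0:ℝ) < U^2*V^2-1).ne']
    ring
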